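/- Let $G$ be a group and $c$ a $G$-invariant closure operator on the power set of $G$ (i.e., $c(gA) = g\,c(A)$ for all $g, A$). Define $S_c$ as the set of pairs $(\Delta, g)$ with $\Delta$ a $c$-closed subset of $G$ containing $1$ and $g$, with multiplication $(\Delta, g)(\Xi, h) = (c(\Delta \cup g\Xi), gh)$, inversion $(\Delta, g)^{-1} = (g^{-1}\Delta, g^{-1})$, and identity $(c(\{1\}), 1)$. Then $S_c$ is an inverse monoid: every element $s$ satisfies $s s^{-1} s = s$ and $s^{-1} s s^{-1} = s^{-1}$, and idempotents commute. -/
import Mathlib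


open scoped Pointwise

variable {G : Type*} [Group G]

/-- The set of pairs `(Δ, g)` with `Δ` a `c`-closed subset of `G` containing `1` and `g`. -/
def SC (c : ClosureOperator (Set G)) : Type _ :=
  {p : Set G × G // c p.1 = p.1 ∧ (1 : G) ∈ p.1 ∧ p.2 ∈ p.1}

/-- Multiplication `(Δ, g)(Ξ, h) = (c (Δ ∪ gΞ), gh)`. -/
def SCmul (c : ClosureOperator (Set G)) (s t : SC c) : SC c :=
  ⟨(c (s.1.1 ∪ s.1.2 • t.1.1), s.1.2 * t.1.2), by
    refine ⟨c.idempotent _, ?_, ?_⟩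
    · exact c.le_closure _ (Or.inl s.2.2.1)
    · exact c.le_closure _ (Or.inr (by
        simpa [smul_eq_mul] using Set.smul_mem_smul_set (a := s.1.2) t.2.2.2))⟩

/-- Inversion `(Δ, g)⁻¹ = (g⁻¹Δ, g⁻¹)` (needs `G`-invariance of `c`). -/
def SCinv (c : ClosureOperator (Set G))
    (hinv : ∀ (g : G) (A : Set G), c (g • A) = g • c A) (s : SC c) : SC c :=
  ⟨(s.1.2⁻¹ • s.1.1, s.1.2⁻¹), by
    refine ⟨by rw [hinv, s.2.1], ?_, ?_⟩
    · exact Set.mem_smul_set.mpr ⟨s.1.2, s.2.2.2, by simp⟩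
    · exact Set.mem_smul_set.mpr ⟨1, s.2.2.1, by simp⟩⟩

/-- The identity element `(c {1}, 1)`. -/
def SCone (c : ClosureOperator (Set G)) : SC c :=
  ⟨(c {1}, 1), c.idempotent _, c.le_closure _ rfl, c.le_closure _ rfl⟩

/-- The candidate maximum `(c {1, g}, g)` of the `σ`-class of `(Δ, g)`. -/
def SCm (c : ClosureOperator (Set G)) (s : SC c) : SC c :=
  ⟨(c {1, s.1.2}, s.1.2), c.idempotent _, c.le_closure _ (Or.inl rfl),
    c.le_closure _ (Or.inr rfl)⟩


lemma cc_left {G : Type*} (c : ClosureOperator (Set G)) (A B : Set G) :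
    c (c A ∪ B) = c (A ∪ B) := by
  apply le_antisymm
  · refine c.closure_min (Set.union_subset ?_ ?_) (c.isClosed_closure _)
    · exact c.monotone Set.subset_union_left
    · exact Set.subset_union_right.trans (c.le_closure _)
  · exact c.monotone (Set.union_subset_union_left _ (c.le_closure _))

lemma cc_right {G : Type*} (c : ClosureOperator (Set G)) (A B : Set G) :
    c (A ∪ c B) = c (A ∪ B) := by
  rw [Set.union_comm, cc_left, Set.union_comm]

lemma SC_ext {G : Type*} [Group G] {c : ClosureOperator (Set G)} {s t : SC c}
    (h1 : s.1.1 = t.1.1) (h2 : s.1.2 = t.1.2) : s = t :=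
  Subtype.ext (Prod.ext h1 h2)

/-- `S_c` is an inverse monoid: multiplication is associative, `(c {1}, 1)` is a two-sided
identity, `s s⁻¹ s = s` and `s⁻¹ s s⁻¹ = s⁻¹` hold, and idempotents commute. -/
theorem stmt7 (c : ClosureOperator (Set G))
    (hinv : ∀ (g : G) (A : Set G), c (g • A) = g • c A) :
    (∀ s t u : SC c, SCmul c (SCmul c s t) u = SCmul c s (SCmul c t u)) ∧
    (∀ s : SC c, SCmul c (SCone c) s = s ∧ SCmul c s (SCone c) = s) ∧
    (∀ s : SC c, SCmul c (SCmul c s (SCinv c hinv s)) s = s) ∧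
    (∀ s : SC c, SCmul c (SCmul c (SCinv c hinv s) s) (SCinv c hinv s) = SCinv c hinv s) ∧
    (∀ e f : SC c, SCmul c e e = e → SCmul c f f = f → SCmul c e f = SCmul c f e) := by
  refine ⟨?_, ?_, ?_, ?_, ?_⟩
  · intro s t u
    refine SC_ext ?_ (mul_assoc _ _ _)
    show c (c (s.1.1 ∪ s.1.2 • t.1.1) ∪ (s.1.2 * t.1.2) • u.1.1)
        = c (s.1.1 ∪ s.1.2 • c (t.1.1 ∪ t.1.2 • u.1.1))
    rw [cc_left, ← hinv, cc_right, Set.smul_set_union, smul_smul, Set.union_assoc]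
  · intro s
    constructor
    · refine SC_ext ?_ (one_mul _)
      show c (c {1} ∪ (1 : G) • s.1.1) = s.1.1
      rw [one_smul, cc_left, Set.union_eq_self_of_subset_left
        (Set.singleton_subset_iff.2 s.2.2.1), s.2.1]
    · refine SC_ext ?_ (mul_one _)
      show c (s.1.1 ∪ s.1.2 • c {1}) = s.1.1
      rw [← hinv, cc_right, Set.smul_set_singleton, smul_eq_mul, mul_one,
        Set.union_eq_self_of_subset_right (Set.singleton_subset_iff.2 s.2.2.2), s.2.1]
  · intro s
    refine SC_ext ?_ (by show s.1.2 * s.1.2⁻¹ * s.1.2 = s.1.2; group)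
    show c (c (s.1.1 ∪ s.1.2 • s.1.2⁻¹ • s.1.1) ∪ (s.1.2 * s.1.2⁻¹) • s.1.1) = s.1.1
    rw [smul_inv_smul, mul_inv_cancel, one_smul, Set.union_self, cc_left,
      Set.union_self, s.2.1]
  · intro s
    refine SC_ext ?_ (by show s.1.2⁻¹ * s.1.2 * s.1.2⁻¹ = s.1.2⁻¹; group)
    show c (c (s.1.2⁻¹ • s.1.1 ∪ s.1.2⁻¹ • s.1.1) ∪ (s.1.2⁻¹ * s.1.2) • s.1.2⁻¹ • s.1.1)
        = s.1.2⁻¹ • s.1.1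
    rw [inv_mul_cancel, one_smul, Set.union_self, cc_left, Set.union_self,
      hinv, s.2.1]
  · intro e f he hf
    have he2 : e.1.2 = 1 := by
      have h : e.1.2 * e.1.2 = e.1.2 := congrArg (fun x : SC c => x.1.2) he
      exact mul_left_cancel (a := e.1.2) (by rw [h, mul_one])
    have hf2 : f.1.2 = 1 := by
      have h : f.1.2 * f.1.2 = f.1.2 := congrArg (fun x : SC c => x.1.2) hf
      exact mul_left_cancel (a := f.1.2) (by rw [h, mul_one])
    refine SC_ext ?_ (show e.1.2 * f.1.2 = f.1.2 * e.1.2 by rw [he2, hf2])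
    show c (e.1.1 ∪ e.1.2 • f.1.1) = c (f.1.1 ∪ f.1.2 • e.1.1)
    rw [he2, hf2, one_smul, one_smul, Set.union_comm]
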